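/- Let H be a finite set, m = |H|, and Q_i : ℝ^d → ℝ differentiable for i ∈ H. Suppose the average (1/m)∑_{i∈H} Q_i is γ-strongly convex in the sense ⟨∇Q_H(x) - ∇Q_H(y), x - y⟩ ≥ γ‖x - y‖² for all x, y, where Q_H = (1/m)∑_{i∈H}Q_i, and let x_H be a point with ∇Q_H(x_H) = 0. Suppose also each ‖∇Q_i(x)‖ ≤ C + µ‖x - x_H‖ for all x. Let H' ⊆ H and B be a finite index set disjoint from H with |B| ≤ |H \ H'|, and g_k ∈ ℝ^d for k ∈ B satisfy ‖g_k‖ ≤ max_{j ∈ H\H'}‖∇Q_j(x)‖ for each k. Then at any point x: ⟨x - x_H, ∑_{j∈H'}∇Q_j(x) + ∑_{k∈B} g_k⟩ ≥ γ m ‖x - x_H‖² - 2|H\H'| ‖x - x_H‖ (C + µ‖x - x_H‖). -/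

import Mathlib

open RealInnerProductSpace

theorem stmt_14 {ι : Type*} [DecidableEq ι] {d : ℕ}
    (H H' B : Finset ι) (hH' : H' ⊆ H) (hHne : H.Nonempty)
    (hdisj : Disjoint B H) (hBcard : B.card ≤ (H \ H').card)
    (Q : ι → EuclideanSpace ℝ (Fin d) → ℝ)
    (gr : ι → EuclideanSpace ℝ (Fin d) → EuclideanSpace ℝ (Fin d))
    (hgrad : ∀ i ∈ H, ∀ x, HasGradientAt (Q i) (gr i x) x)
    (γ μ C : ℝ) (hγ : 0 < γ) (hμ : 0 ≤ μ) (hC : 0 ≤ C)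
    (xH : EuclideanSpace ℝ (Fin d))
    (hmono : ∀ x y : EuclideanSpace ℝ (Fin d),
      ⟪(H.card : ℝ)⁻¹ • (∑ i ∈ H, gr i x) - (H.card : ℝ)⁻¹ • (∑ i ∈ H, gr i y), x - y⟫
        ≥ γ * ‖x - y‖ ^ 2)
    (hstat : (H.card : ℝ)⁻¹ • (∑ i ∈ H, gr i xH) = 0)
    (hbound : ∀ i ∈ H, ∀ x, ‖gr i x‖ ≤ C + μ * ‖x - xH‖)
    (g : ι → EuclideanSpace ℝ (Fin d)) (x : EuclideanSpace ℝ (Fin d))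
    (hg : ∀ k ∈ B, ∃ j ∈ H \ H', ‖g k‖ ≤ ‖gr j x‖) :
    ⟪x - xH, (∑ j ∈ H', gr j x) + ∑ k ∈ B, g k⟫
      ≥ γ * H.card * ‖x - xH‖ ^ 2
        - 2 * (H \ H').card * ‖x - xH‖ * (C + μ * ‖x - xH‖) := by
  have hcard : (0:ℝ) < (H.card : ℝ) := by exact_mod_cast Finset.card_pos.2 hHne
  set n := x - xH with hn
  set R : ℝ := C + μ * ‖n‖ with hR
  have hR0 : 0 ≤ R := by positivity
  have hn0 : (0:ℝ) ≤ ‖n‖ := norm_nonneg _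
  -- step 1
  have h1 : ⟪n, ∑ i ∈ H, gr i x⟫ ≥ γ * H.card * ‖n‖ ^ 2 := by
    have h := hmono x xH
    rw [hstat, sub_zero, real_inner_smul_left] at h
    have h2 : (H.card : ℝ) * ((H.card : ℝ)⁻¹ * ⟪∑ i ∈ H, gr i x, x - xH⟫)
        ≥ (H.card : ℝ) * (γ * ‖x - xH‖ ^ 2) := by
      exact mul_le_mul_of_nonneg_left h hcard.le
    rw [← mul_assoc, mul_inv_cancel₀ hcard.ne', one_mul] at h2
    rw [real_inner_comm]
    calc ⟪∑ i ∈ H, gr i x, n⟫ ≥ (H.card : ℝ) * (γ * ‖n‖ ^ 2) := h2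
    _ = γ * H.card * ‖n‖ ^ 2 := by ring
  -- norm bounds on sums
  have hnormD : ‖∑ i ∈ H \ H', gr i x‖ ≤ (H \ H').card * R := by
    calc ‖∑ i ∈ H \ H', gr i x‖ ≤ ∑ i ∈ H \ H', ‖gr i x‖ := norm_sum_le _ _
    _ ≤ ∑ _i ∈ H \ H', R :=
        Finset.sum_le_sum (fun i hi => hbound i (Finset.mem_sdiff.1 hi).1 x)
    _ = (H \ H').card * R := by rw [Finset.sum_const, nsmul_eq_mul]
  have hnormB : ‖∑ k ∈ B, g k‖ ≤ (H \ H').card * R := by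
    calc ‖∑ k ∈ B, g k‖ ≤ ∑ k ∈ B, ‖g k‖ := norm_sum_le _ _
    _ ≤ ∑ _k ∈ B, R := by
        refine Finset.sum_le_sum (fun k hk => ?_)
        obtain ⟨j, hj, hle⟩ := hg k hk
        exact hle.trans (hbound j (Finset.mem_sdiff.1 hj).1 x)
    _ = B.card * R := by rw [Finset.sum_const, nsmul_eq_mul]
    _ ≤ (H \ H').card * R := by
        exact mul_le_mul_of_nonneg_right (by exact_mod_cast hBcard) hR0
  have hD : ⟪n, ∑ i ∈ H \ H', gr i x⟫ ≤ (H \ H').card * ‖n‖ * R := by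
    calc ⟪n, ∑ i ∈ H \ H', gr i x⟫ ≤ ‖n‖ * ‖∑ i ∈ H \ H', gr i x‖ :=
      real_inner_le_norm _ _
    _ ≤ ‖n‖ * ((H \ H').card * R) := mul_le_mul_of_nonneg_left hnormD hn0
    _ = (H \ H').card * ‖n‖ * R := by ring
  have hB2 : ⟪n, ∑ k ∈ B, g k⟫ ≥ -((H \ H').card * ‖n‖ * R) := by
    have := abs_real_inner_le_norm n (∑ k ∈ B, g k)
    have h' : ‖n‖ * ‖∑ k ∈ B, g k‖ ≤ (H \ H').card * ‖n‖ * R := by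
      calc ‖n‖ * ‖∑ k ∈ B, g k‖ ≤ ‖n‖ * ((H \ H').card * R) :=
        mul_le_mul_of_nonneg_left hnormB hn0
      _ = (H \ H').card * ‖n‖ * R := by ring
    have := neg_abs_le ⟪n, ∑ k ∈ B, g k⟫
    nlinarith [abs_real_inner_le_norm n (∑ k ∈ B, g k)]
  -- decompose
  have hsplit : (∑ i ∈ H, gr i x) = (∑ j ∈ H', gr j x) + ∑ i ∈ H \ H', gr i x := by
    rw [add_comm, Finset.sum_sdiff hH']
  have hdec : ⟪n, ∑ j ∈ H', gr j x⟫
      = ⟪n, ∑ i ∈ H, gr i x⟫ - ⟪n, ∑ i ∈ H \ H', gr i x⟫ := by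
    rw [hsplit, inner_add_right]; ring
  rw [inner_add_right, hdec]
  linarith
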